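/- arXiv:2409.12342 — 3 statements merged into one kernel-verified Lean document; each statement's English description precedes it below -/
import Mathlib

section
/- For every x ∈ X: Ĥ⁺(x) + Ĥ⁻(x) = 0 if and only if there exists a constant C_s ≥ 0 such that h⁺(fⁿ(x)) + h⁻(fⁿ(x)) ≤ C_s for every integer n ∈ ℤ. -/
open Filter Topology

section aux

variable {X : Type*} (g : Equiv.Perm X) (lam c : ℝ)

lemma key_abs (hl : 1 < lam) (hc : 0 ≤ c) (h : X → ℝ)
    (hq : ∀ x, |h (g x) - lam * h x| ≤ c) (x : X) :
    ∀ n : ℕ, |h ((g ^ n) x) / lam ^ n - h x| ≤ c / (lam - 1) * (1 - (lam ^ n)⁻¹) := by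
  have hlpos : (0:ℝ) < lam := by linarith
  intro n
  induction n with
  | zero => simp
  | succ n ih =>
      have hpow : (0:ℝ) < lam ^ n := pow_pos hlpos n
      have hpow1 : (0:ℝ) < lam ^ (n+1) := pow_pos hlpos (n+1)
      have happ : (g ^ (n+1)) x = g ((g ^ n) x) := by
        rw [pow_succ']; rfl
      have step : |h ((g ^ (n+1)) x) / lam ^ (n+1) - h ((g ^ n) x) / lam ^ n|
          ≤ c / lam ^ (n+1) := by
        have := hq ((g ^ n) x)
        rw [happ]
        have heq : h (g ((g ^ n) x)) / lam ^ (n+1) - h ((g ^ n) x) / lam ^ n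
            = (h (g ((g ^ n) x)) - lam * h ((g ^ n) x)) / lam ^ (n+1) := by
          field_simp
          ring
        rw [heq, abs_div, abs_of_pos hpow1]
        exact div_le_div_of_nonneg_right this hpow1.le
      calc |h ((g ^ (n+1)) x) / lam ^ (n+1) - h x|
          ≤ |h ((g ^ (n+1)) x) / lam ^ (n+1) - h ((g ^ n) x) / lam ^ n|
            + |h ((g ^ n) x) / lam ^ n - h x| := abs_sub_le _ _ _
        _ ≤ c / lam ^ (n+1) + c / (lam - 1) * (1 - (lam ^ n)⁻¹) := add_le_add step ih
        _ = c / (lam - 1) * (1 - (lam ^ (n+1))⁻¹) := by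
            have h1 : lam ≠ 0 := ne_of_gt hlpos
            have h2 : lam - 1 ≠ 0 := ne_of_gt (by linarith)
            have h4 : lam ^ (n+1) ≠ 0 := (pow_pos hlpos (n+1)).ne'
            field_simp
            ring
  
lemma key_nonneg (hl : 1 < lam) (h : X → ℝ) (h0 : ∀ x, 0 ≤ h x) (H : X → ℝ)
    (hH : ∀ x, Tendsto (fun n : ℕ => h ((g ^ n) x) / lam ^ n) atTop (nhds (H x)))
    (x : X) : 0 ≤ H x := by
  have hlpos : (0:ℝ) < lam := by linarith
  exact ge_of_tendsto' (hH x) fun n => div_nonneg (h0 _) (pow_pos hlpos n).le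

lemma key_bound (hl : 1 < lam) (hc : 0 ≤ c) (h : X → ℝ)
    (hq : ∀ x, |h (g x) - lam * h x| ≤ c) (H : X → ℝ)
    (hH : ∀ x, Tendsto (fun n : ℕ => h ((g ^ n) x) / lam ^ n) atTop (nhds (H x)))
    (x : X) (hx : H x = 0) : h x ≤ c / (lam - 1) := by
  have hlpos : (0:ℝ) < lam := by linarith
  have habs : Tendsto (fun n : ℕ => |h ((g ^ n) x) / lam ^ n - h x|) atTop
      (nhds (|H x - h x|)) := ((hH x).sub tendsto_const_nhds).abs
  have hle : |H x - h x| ≤ c / (lam - 1) :=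
    le_of_tendsto habs (Filter.Eventually.of_forall fun n =>
      (key_abs g lam c hl hc h hq x n).trans (by
        have : (0:ℝ) < (lam ^ n)⁻¹ := inv_pos.mpr (pow_pos hlpos n)
        have hcd : 0 ≤ c / (lam - 1) := div_nonneg hc (by linarith)
        nlinarith))
  rw [hx] at hle
  have := abs_le.mp hle
  linarith [this.1]

lemma key_mul (hl : 1 < lam) (h : X → ℝ) (H : X → ℝ)
    (hH : ∀ x, Tendsto (fun n : ℕ => h ((g ^ n) x) / lam ^ n) atTop (nhds (H x)))
    (x : X) : H (g x) = lam * H x := by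
  have hlpos : (0:ℝ) < lam := by linarith
  have h1 : Tendsto (fun n : ℕ => h ((g ^ (n+1)) x) / lam ^ (n+1)) atTop (nhds (H x)) :=
    (hH x).comp (tendsto_add_atTop_nat 1)
  have h2 : Tendsto (fun n : ℕ => lam * (h ((g ^ (n+1)) x) / lam ^ (n+1))) atTop
      (nhds (lam * H x)) := h1.const_mul lam
  have heq : (fun n : ℕ => lam * (h ((g ^ (n+1)) x) / lam ^ (n+1)))
      = fun n : ℕ => h ((g ^ n) (g x)) / lam ^ n := by
    funext n
    have happ : (g ^ (n+1)) x = (g ^ n) (g x) := by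
      rw [pow_succ]; rfl
    rw [happ, pow_succ]
    field_simp
  rw [heq] at h2
  exact tendsto_nhds_unique (hH (g x)) h2

lemma key_zero (hl : 1 < lam) (h : X → ℝ) (h0 : ∀ x, 0 ≤ h x) (H : X → ℝ)
    (hH : ∀ x, Tendsto (fun n : ℕ => h ((g ^ n) x) / lam ^ n) atTop (nhds (H x)))
    (x : X) (C : ℝ) (hC : ∀ n : ℕ, h ((g ^ n) x) ≤ C) : H x = 0 := by
  have hlpos : (0:ℝ) < lam := by linarith
  have hz : Tendsto (fun n : ℕ => C * (lam⁻¹) ^ n) atTop (nhds 0) := by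
    have : Tendsto (fun n : ℕ => (lam⁻¹) ^ n) atTop (nhds 0) :=
      tendsto_pow_atTop_nhds_zero_of_lt_one (by positivity)
        (by rw [inv_lt_one_iff₀]; right; exact hl)
    simpa using this.const_mul C
  have hsq : Tendsto (fun n : ℕ => h ((g ^ n) x) / lam ^ n) atTop (nhds 0) := by
    refine tendsto_of_tendsto_of_tendsto_of_le_of_le tendsto_const_nhds hz
      (fun n => div_nonneg (h0 _) (pow_pos hlpos n).le) (fun n => ?_)
    rw [div_eq_mul_inv, ← inv_pow]
    exact mul_le_mul_of_nonneg_right (hC n) (by positivity)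
  exact tendsto_nhds_unique (hH x) hsq

end aux

/-- A marked point is stable (its two-sided canonical height vanishes) iff its
orbit heights are uniformly bounded over all `n ∈ ℤ`. -/
theorem stable_iff_bounded_orbit_heights
    {X : Type*} (f : Equiv.Perm X) (lp lm c : ℝ)
    (hlp : 1 < lp) (hlm : 1 < lm) (hc : 0 ≤ c)
    (hp hm : X → ℝ)
    (hp0 : ∀ x : X, 0 ≤ hp x) (hm0 : ∀ x : X, 0 ≤ hm x)
    (hpq : ∀ x : X, |hp (f x) - lp * hp x| ≤ c)
    (hmq : ∀ x : X, |hm (f.symm x) - lm * hm x| ≤ c)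
    (Hp Hm : X → ℝ)
    (hHp : ∀ x : X,
      Filter.Tendsto (fun n : ℕ => hp ((f ^ (n : ℤ)) x) / lp ^ n) Filter.atTop (nhds (Hp x)))
    (hHm : ∀ x : X,
      Filter.Tendsto (fun n : ℕ => hm ((f ^ (-(n : ℤ))) x) / lm ^ n) Filter.atTop (nhds (Hm x))) :
    ∀ x : X, (Hp x + Hm x = 0 ↔
      ∃ Cs : ℝ, 0 ≤ Cs ∧ ∀ n : ℤ, hp ((f ^ n) x) + hm ((f ^ n) x) ≤ Cs) := by
  -- rewrite the limit hypotheses in terms of natural powers of f and f.symm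
  have hfp : ∀ n : ℕ, (f ^ (n : ℤ)) = f ^ n := fun n => zpow_natCast f n
  have hfm : ∀ n : ℕ, (f ^ (-(n : ℤ))) = f.symm ^ n := by
    intro n
    rw [zpow_neg, zpow_natCast, ← inv_pow]
    rfl
  have hHp' : ∀ x : X,
      Tendsto (fun n : ℕ => hp ((f ^ n) x) / lp ^ n) atTop (nhds (Hp x)) := by
    intro x
    have := hHp x
    simpa only [hfp] using this
  have hHm' : ∀ x : X,
      Tendsto (fun n : ℕ => hm ((f.symm ^ n) x) / lm ^ n) atTop (nhds (Hm x)) := by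
    intro x
    have := hHm x
    simpa only [hfm] using this
  intro x
  constructor
  · intro hsum
    have hHpnn := key_nonneg f lp hlp hp hp0 Hp hHp' x
    have hHmnn := key_nonneg f.symm lm hlm hm hm0 Hm hHm' x
    have hpz : Hp x = 0 := by linarith
    have hmz : Hm x = 0 := by linarith
    -- vanishing along the whole orbit
    have horbit : ∀ n : ℤ, Hp ((f ^ n) x) = 0 ∧ Hm ((f ^ n) x) = 0 := by
      intro n
      induction n using Int.induction_on with
      | zero => simpa using ⟨hpz, hmz⟩
      | succ n ih =>
          have happ : (f ^ ((n:ℤ) + 1)) x = f ((f ^ (n:ℤ)) x) := by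
            rw [show ((n:ℤ) + 1) = 1 + n by ring, zpow_add, zpow_one]; rfl
          constructor
          · rw [happ, key_mul f lp hlp hp Hp hHp', ih.1, mul_zero]
          · have hsymm : f.symm ((f ^ ((n:ℤ)+1)) x) = (f ^ (n:ℤ)) x := by
              rw [happ]; exact f.symm_apply_apply _
            have := key_mul f.symm lm hlm hm Hm hHm' ((f ^ ((n:ℤ)+1)) x)
            rw [hsymm, ih.2] at this
            have hlm0 : lm ≠ 0 := by linarith
            rcases mul_eq_zero.mp this.symm with h | h
            · exact absurd h hlm0
            · exact h
      | pred n ih =>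
          have happ : (f ^ (-(n:ℤ))) x = f ((f ^ (-(n:ℤ) - 1)) x) := by
            have : (f ^ (-(n:ℤ))) = f * f ^ (-(n:ℤ) - 1) := by
              rw [← zpow_one_add]; ring_nf
            rw [this]; rfl
          constructor
          · have := key_mul f lp hlp hp Hp hHp' ((f ^ (-(n:ℤ) - 1)) x)
            rw [← happ, ih.1] at this
            have hlp0 : lp ≠ 0 := by linarith
            rcases mul_eq_zero.mp this.symm with h | h
            · exact absurd h hlp0
            · exact h
          · have hsymm : f.symm ((f ^ (-(n:ℤ))) x) = (f ^ (-(n:ℤ) - 1)) x := by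
              rw [happ]; exact f.symm_apply_apply _
            have := key_mul f.symm lm hlm hm Hm hHm' ((f ^ (-(n:ℤ))) x)
            rw [hsymm, ih.2, mul_zero] at this
            exact this
    have hnn : 0 ≤ c / (lp - 1) + c / (lm - 1) :=
      add_nonneg (div_nonneg hc (by linarith)) (div_nonneg hc (by linarith))
    refine ⟨c / (lp - 1) + c / (lm - 1), hnn, fun n => ?_⟩
    have h1 := key_bound f lp c hlp hc hp hpq Hp hHp' ((f ^ n) x) (horbit n).1
    have h2 := key_bound f.symm lm c hlm hc hm hmq Hm hHm' ((f ^ n) x) (horbit n).2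
    linarith
  · rintro ⟨Cs, hCs0, hCs⟩
    have hpz : Hp x = 0 := by
      refine key_zero f lp hlp hp hp0 Hp hHp' x Cs fun n => ?_
      have := hCs (n : ℤ)
      rw [hfp] at this
      linarith [hm0 ((f ^ n) x)]
    have hmz : Hm x = 0 := by
      refine key_zero f.symm lm hlm hm hm0 Hm hHm' x Cs fun n => ?_
      have := hCs (-(n : ℤ))
      rw [hfm] at this
      linarith [hp0 ((f.symm ^ n) x)]
    rw [hpz, hmz, add_zero]
end

section
/- For every x ∈ X and every integer n ∈ ℤ, one has h⁺(fⁿ(x)) + h⁻(fⁿ(x)) ≤ λ₊ⁿ·Ĥ⁺(x) + λ₋⁻ⁿ·Ĥ⁻(x) + c/(λ₊−1) + c/(λ₋−1). -/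
open Filter

private lemma aux_le {X : Type*} (g : Equiv.Perm X) (l c : ℝ) (hl : 1 < l) (hc : 0 ≤ c)
    (h : X → ℝ) (hq : ∀ x, |h (g x) - l * h x| ≤ c)
    (H : X → ℝ)
    (hH : ∀ x, Filter.Tendsto (fun n : ℕ => h ((g ^ (n : ℤ)) x) / l ^ n)
      Filter.atTop (nhds (H x))) :
    ∀ y, h y ≤ H y + c / (l - 1) := by
  have hl0 : (0:ℝ) < l := lt_trans one_pos hl
  have hl1 : (0:ℝ) < l - 1 := by linarith
  intro y
  have key : ∀ m : ℕ, h y - (c/(l-1)) * (1 - (l⁻¹)^m) ≤ h ((g ^ (m:ℤ)) y) / l ^ m := by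
    intro m
    induction m with
    | zero => simp
    | succ m ih =>
      have hlm1 : (0:ℝ) < l ^ (m+1) := pow_pos hl0 _
      have e : (g ^ ((m+1:ℕ):ℤ)) y = g ((g ^ (m:ℤ)) y) := by
        push_cast
        rw [add_comm, zpow_add, zpow_one]
        rfl
      have step : l * h ((g ^ (m:ℤ)) y) - c ≤ h ((g ^ ((m+1:ℕ):ℤ)) y) := by
        have := abs_le.mp (hq ((g ^ (m:ℤ)) y))
        rw [e]; linarith [this.1]
      have h1 : h ((g ^ (m:ℤ)) y) / l ^ m - c * (l⁻¹)^(m+1) ≤ h ((g ^ ((m+1:ℕ):ℤ)) y) / l ^ (m+1) := by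
        rw [le_div_iff₀ hlm1]
        have : (h ((g ^ (m:ℤ)) y) / l ^ m - c * (l⁻¹)^(m+1)) * l^(m+1)
            = l * (h ((g^(m:ℤ)) y)) - c := by
          rw [inv_pow]
          field_simp
          ring
        rw [this]; linarith
      have hident : (c/(l-1)) * (1 - (l⁻¹)^(m+1)) = (c/(l-1)) * (1 - (l⁻¹)^m) + c * (l⁻¹)^(m+1) := by
        rw [pow_succ]
        field_simp
        ring
      calc h y - (c/(l-1)) * (1 - (l⁻¹)^(m+1))
          = (h y - (c/(l-1)) * (1 - (l⁻¹)^m)) - c * (l⁻¹)^(m+1) := by rw [hident]; ring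
        _ ≤ h ((g ^ (m:ℤ)) y) / l ^ m - c * (l⁻¹)^(m+1) := by linarith
        _ ≤ _ := h1
  have bound : ∀ m : ℕ, h y - c/(l-1) ≤ h ((g ^ (m:ℤ)) y) / l ^ m := by
    intro m
    refine le_trans ?_ (key m)
    have h1 : (0:ℝ) ≤ (l⁻¹)^m := pow_nonneg (inv_nonneg.mpr hl0.le) m
    have h2 : (0:ℝ) ≤ c/(l-1) := div_nonneg hc hl1.le
    nlinarith
  have := ge_of_tendsto' (hH y) bound
  linarith

private lemma aux_mul {X : Type*} (g : Equiv.Perm X) (l : ℝ) (hl : 1 < l)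
    (h : X → ℝ) (H : X → ℝ)
    (hH : ∀ x, Filter.Tendsto (fun n : ℕ => h ((g ^ (n : ℤ)) x) / l ^ n)
      Filter.atTop (nhds (H x))) :
    ∀ y, H (g y) = l * H y := by
  have hl0 : (0:ℝ) < l := lt_trans one_pos hl
  intro y
  have h1 := hH (g y)
  have h2 : Filter.Tendsto (fun m : ℕ => l * (h ((g ^ ((m+1:ℕ):ℤ)) y) / l ^ (m+1)))
      Filter.atTop (nhds (l * H y)) :=
    tendsto_const_nhds.mul ((hH y).comp (tendsto_add_atTop_nat 1))
  have heq : (fun m : ℕ => h ((g ^ (m:ℤ)) (g y)) / l ^ m)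
      = fun m : ℕ => l * (h ((g ^ ((m+1:ℕ):ℤ)) y) / l ^ (m+1)) := by
    funext m
    have e : (g ^ ((m+1:ℕ):ℤ)) y = (g ^ (m:ℤ)) (g y) := by
      push_cast
      rw [zpow_add_one]
      rfl
    rw [e, pow_succ]
    field_simp
  rw [heq] at h1
  exact tendsto_nhds_unique h1 h2

private lemma aux_zpow {X : Type*} (g : Equiv.Perm X) (l : ℝ) (hl0 : l ≠ 0) (H : X → ℝ)
    (HG : ∀ y, H (g y) = l * H y) : ∀ (n : ℤ) (x : X), H ((g ^ n) x) = l ^ n * H x := by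
  have Hinv : ∀ y, H (g⁻¹ y) = l⁻¹ * H y := by
    intro y
    have h1 := HG (g⁻¹ y)
    rw [show g (g⁻¹ y) = y from g.apply_symm_apply y] at h1
    field_simp [h1]
    rw [h1]; ring
  intro n
  induction n using Int.induction_on with
  | zero => intro x; simp
  | succ k ih =>
    intro x
    have e : (g ^ ((k:ℤ)+1)) x = g ((g ^ (k:ℤ)) x) := by
      rw [add_comm, zpow_add, zpow_one]; rfl
    rw [e, HG, ih, zpow_add₀ hl0, zpow_one]; ring
  | pred k ih =>
    intro x
    have e : (g ^ (-(k:ℤ)-1)) x = g⁻¹ ((g ^ (-(k:ℤ))) x) := by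
      rw [sub_eq_add_neg, add_comm, zpow_add, zpow_neg_one]; rfl
    rw [e, Hinv, ih, sub_eq_add_neg, zpow_add₀ hl0, zpow_neg_one]; ring

/-- Orbit-height inequality from the proof of the weak Northcott property. -/
theorem orbit_height_inequality
    {X : Type*} (f : Equiv.Perm X) (lp lm c : ℝ)
    (hlp : 1 < lp) (hlm : 1 < lm) (hc : 0 ≤ c)
    (hp hm : X → ℝ)
    (hp0 : ∀ x : X, 0 ≤ hp x) (hm0 : ∀ x : X, 0 ≤ hm x)
    (hpq : ∀ x : X, |hp (f x) - lp * hp x| ≤ c)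
    (hmq : ∀ x : X, |hm (f.symm x) - lm * hm x| ≤ c)
    (Hp Hm : X → ℝ)
    (hHp : ∀ x : X,
      Filter.Tendsto (fun n : ℕ => hp ((f ^ (n : ℤ)) x) / lp ^ n) Filter.atTop (nhds (Hp x)))
    (hHm : ∀ x : X,
      Filter.Tendsto (fun n : ℕ => hm ((f ^ (-(n : ℤ))) x) / lm ^ n) Filter.atTop (nhds (Hm x))) :
    ∀ (x : X) (n : ℤ),
      hp ((f ^ n) x) + hm ((f ^ n) x) ≤
        lp ^ n * Hp x + lm ^ (-n) * Hm x + c / (lp - 1) + c / (lm - 1) := by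
  have hlp0 : lp ≠ 0 := by positivity
  have hlm0 : lm ≠ 0 := by positivity
  -- minus side: work with g := f⁻¹
  have hmq' : ∀ x, |hm (f⁻¹ x) - lm * hm x| ≤ c := hmq
  have hHm' : ∀ x, Filter.Tendsto (fun n : ℕ => hm (((f⁻¹) ^ (n : ℤ)) x) / lm ^ n)
      Filter.atTop (nhds (Hm x)) := by
    intro x
    have := hHm x
    simp only [inv_zpow, ← zpow_neg]
    exact this
  intro x n
  have A1 : hp ((f ^ n) x) ≤ Hp ((f ^ n) x) + c / (lp - 1) :=
    aux_le f lp c hlp hc hp hpq Hp hHp _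
  have A2 : Hp ((f ^ n) x) = lp ^ n * Hp x :=
    aux_zpow f lp hlp0 Hp (aux_mul f lp hlp hp Hp hHp) n x
  have B1 : hm ((f ^ n) x) ≤ Hm ((f ^ n) x) + c / (lm - 1) :=
    aux_le f⁻¹ lm c hlm hc hm hmq' Hm hHm' _
  have B2 : Hm ((f ^ n) x) = lm ^ (-n) * Hm x := by
    have := aux_zpow f⁻¹ lm hlm0 Hm (aux_mul f⁻¹ lm hlm hm Hm hHm') (-n) x
    simpa using this
  linarith
end

section
/- Assume there exists ε > 0 such that for every x ∈ X, if Ĥ⁺(x) + Ĥ⁻(x) < ε then Ĥ⁺(x) + Ĥ⁻(x) = 0. Then for every x ∈ X: Ĥ⁺(x) = 0 if and only if Ĥ⁻(x) = 0, and either is equivalent to Ĥ⁺(x) + Ĥ⁻(x) = 0. -/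
/-- Given the weak Northcott gap property, vanishing of the forward, backward and
total canonical heights are all equivalent. -/
theorem vanishing_heights_equiv
    {X : Type*} (f : Equiv.Perm X) (lp lm c : ℝ)
    (hlp : 1 < lp) (hlm : 1 < lm) (hc : 0 ≤ c)
    (hp hm : X → ℝ)
    (hp0 : ∀ x : X, 0 ≤ hp x) (hm0 : ∀ x : X, 0 ≤ hm x)
    (hpq : ∀ x : X, |hp (f x) - lp * hp x| ≤ c)
    (hmq : ∀ x : X, |hm (f.symm x) - lm * hm x| ≤ c)
    (Hp Hm : X → ℝ)
    (hHp : ∀ x : X,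
      Filter.Tendsto (fun n : ℕ => hp ((f ^ (n : ℤ)) x) / lp ^ n) Filter.atTop (nhds (Hp x)))
    (hHm : ∀ x : X,
      Filter.Tendsto (fun n : ℕ => hm ((f ^ (-(n : ℤ))) x) / lm ^ n) Filter.atTop (nhds (Hm x)))
    (hgap : ∃ ε : ℝ, 0 < ε ∧ ∀ x : X, Hp x + Hm x < ε → Hp x + Hm x = 0) :
    ∀ x : X, (Hp x = 0 ↔ Hm x = 0) ∧ (Hp x = 0 ↔ Hp x + Hm x = 0) := by
  have hlp0 : (0:ℝ) < lp := lt_trans one_pos hlp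
  have hlm0 : (0:ℝ) < lm := lt_trans one_pos hlm
  -- nonnegativity of the canonical heights
  have Hp0 : ∀ x, 0 ≤ Hp x := fun x =>
    ge_of_tendsto' (hHp x) (fun n => div_nonneg (hp0 _) (pow_nonneg hlp0.le n))
  have Hm0 : ∀ x, 0 ≤ Hm x := fun x =>
    ge_of_tendsto' (hHm x) (fun n => div_nonneg (hm0 _) (pow_nonneg hlm0.le n))
  -- functional equation for Hp
  have HpF : ∀ x, Hp (f x) = lp * Hp x := by
    intro x
    have h1 := hHp (f x)
    have h2 : Filter.Tendsto (fun n : ℕ => lp * (hp ((f ^ ((n:ℤ)+1)) x) / lp ^ (n+1)))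
        Filter.atTop (nhds (lp * Hp x)) := by
      have hshift : Filter.Tendsto (fun n : ℕ => hp ((f ^ (((n+1:ℕ)):ℤ)) x) / lp ^ (n+1))
          Filter.atTop (nhds (Hp x)) := (Filter.tendsto_add_atTop_iff_nat 1).2 (hHp x)
      have : Filter.Tendsto (fun n : ℕ => hp ((f ^ ((n:ℤ)+1)) x) / lp ^ (n+1))
          Filter.atTop (nhds (Hp x)) := by
        convert hshift using 3 with n <;> simp
      exact this.const_mul lp
    have heq : (fun n : ℕ => hp ((f ^ (n:ℤ)) (f x)) / lp ^ n)
        = fun n : ℕ => lp * (hp ((f ^ ((n:ℤ)+1)) x) / lp ^ (n+1)) := by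
      funext n
      have hf : (f ^ ((n:ℤ)+1)) x = (f ^ (n:ℤ)) (f x) := by
        rw [zpow_add_one]; rfl
      rw [hf]
      field_simp
      ring
    rw [heq] at h1
    exact tendsto_nhds_unique h1 h2
  -- functional equation for Hm
  have HmF : ∀ x, Hm (f.symm x) = lm * Hm x := by
    intro x
    have h1 := hHm (f.symm x)
    have h2 : Filter.Tendsto (fun n : ℕ => lm * (hm ((f ^ (-((n:ℤ)+1))) x) / lm ^ (n+1)))
        Filter.atTop (nhds (lm * Hm x)) := by
      have hshift : Filter.Tendsto (fun n : ℕ => hm ((f ^ (-((n+1:ℕ):ℤ))) x) / lm ^ (n+1))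
          Filter.atTop (nhds (Hm x)) := (Filter.tendsto_add_atTop_iff_nat 1).2 (hHm x)
      have : Filter.Tendsto (fun n : ℕ => hm ((f ^ (-((n:ℤ)+1))) x) / lm ^ (n+1))
          Filter.atTop (nhds (Hm x)) := by
        convert hshift using 4 with n <;> simp
      exact this.const_mul lm
    have heq : (fun n : ℕ => hm ((f ^ (-(n:ℤ))) (f.symm x)) / lm ^ n)
        = fun n : ℕ => lm * (hm ((f ^ (-((n:ℤ)+1))) x) / lm ^ (n+1)) := by
      funext n
      have hf : (f ^ (-((n:ℤ)+1))) x = (f ^ (-(n:ℤ))) (f.symm x) := by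
        have : (f ^ (-((n:ℤ)+1))) = (f ^ (-(n:ℤ))) * f⁻¹ := by
          rw [← zpow_neg_one, ← zpow_add]; ring_nf
        rw [this]; rfl
      rw [hf]
      field_simp
      ring
    rw [heq] at h1
    exact tendsto_nhds_unique h1 h2
  -- derived one-step equations
  have HpB : ∀ x, Hp (f.symm x) = Hp x / lp := by
    intro x
    have := HpF (f.symm x)
    rw [f.apply_symm_apply] at this
    field_simp [this]
    linarith
  have HmB : ∀ x, Hm (f x) = Hm x / lm := by
    intro x
    have := HmF (f x)
    rw [f.symm_apply_apply] at this
    field_simp [this]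
    linarith
  -- iterated equations
  have HpN : ∀ (n : ℕ) (x : X), Hp ((f ^ (n:ℤ)) x) = lp ^ n * Hp x := by
    intro n
    induction n with
    | zero => intro x; simp
    | succ n ih =>
      intro x
      have hf : (f ^ ((n+1:ℕ):ℤ)) x = (f ^ (n:ℤ)) (f x) := by
        push_cast; rw [zpow_add_one]; rfl
      rw [hf, ih, HpF]; ring
  have HmN : ∀ (n : ℕ) (x : X), Hm ((f ^ (n:ℤ)) x) = Hm x / lm ^ n := by
    intro n
    induction n with
    | zero => intro x; simp
    | succ n ih =>
      intro x
      have hf : (f ^ ((n+1:ℕ):ℤ)) x = (f ^ (n:ℤ)) (f x) := by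
        push_cast; rw [zpow_add_one]; rfl
      rw [hf, ih, HmB, pow_succ, div_div]; ring_nf
  have HmNneg : ∀ (n : ℕ) (x : X), Hm ((f ^ (-(n:ℤ))) x) = lm ^ n * Hm x := by
    intro n
    induction n with
    | zero => intro x; simp
    | succ n ih =>
      intro x
      have hf : (f ^ (-((n+1:ℕ):ℤ))) x = (f ^ (-(n:ℤ))) (f.symm x) := by
        have : (f ^ (-((n+1:ℕ):ℤ))) = (f ^ (-(n:ℤ))) * f⁻¹ := by
          rw [← zpow_neg_one, ← zpow_add]; push_cast; ring_nf
        rw [this]; rfl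
      rw [hf, ih, HmF]; ring
  have HpNneg : ∀ (n : ℕ) (x : X), Hp ((f ^ (-(n:ℤ))) x) = Hp x / lp ^ n := by
    intro n
    induction n with
    | zero => intro x; simp
    | succ n ih =>
      intro x
      have hf : (f ^ (-((n+1:ℕ):ℤ))) x = (f ^ (-(n:ℤ))) (f.symm x) := by
        have : (f ^ (-((n+1:ℕ):ℤ))) = (f ^ (-(n:ℤ))) * f⁻¹ := by
          rw [← zpow_neg_one, ← zpow_add]; push_cast; ring_nf
        rw [this]; rfl
      rw [hf, ih, HpB, pow_succ, div_div]; ring_nf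
  obtain ⟨ε, hε, hgap⟩ := hgap
  -- forward implication
  have A : ∀ x, Hp x = 0 → Hm x = 0 := by
    intro x hx
    have hdiv : Filter.Tendsto (fun n : ℕ => Hm x / lm ^ n) Filter.atTop (nhds 0) :=
      Filter.Tendsto.div_atTop tendsto_const_nhds
        (tendsto_pow_atTop_atTop_of_one_lt hlm)
    obtain ⟨n, hn⟩ := (hdiv.eventually_lt_const hε).exists
    have hsum : Hp ((f ^ (n:ℤ)) x) + Hm ((f ^ (n:ℤ)) x) < ε := by
      rw [HpN n x, HmN n x, hx]
      simpa using hn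
    have h0 := hgap _ hsum
    rw [HpN n x, HmN n x, hx] at h0
    have : Hm x / lm ^ n = 0 := by linarith
    have hpow : (0:ℝ) < lm ^ n := pow_pos hlm0 n
    field_simp at this
    simpa using this
  have B : ∀ x, Hm x = 0 → Hp x = 0 := by
    intro x hx
    have hdiv : Filter.Tendsto (fun n : ℕ => Hp x / lp ^ n) Filter.atTop (nhds 0) :=
      Filter.Tendsto.div_atTop tendsto_const_nhds
        (tendsto_pow_atTop_atTop_of_one_lt hlp)
    obtain ⟨n, hn⟩ := (hdiv.eventually_lt_const hε).exists
    have hsum : Hp ((f ^ (-(n:ℤ))) x) + Hm ((f ^ (-(n:ℤ))) x) < ε := by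
      rw [HpNneg n x, HmNneg n x, hx]
      simpa using hn
    have h0 := hgap _ hsum
    rw [HpNneg n x, HmNneg n x, hx] at h0
    have : Hp x / lp ^ n = 0 := by linarith
    field_simp at this
    simpa using this
  intro x
  constructor
  · exact ⟨A x, B x⟩
  · constructor
    · intro h; rw [h, A x h]; ring
    · intro h
      have := Hp0 x
      have := Hm0 x
      linarith
end
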